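/- Let $A>0$, $\lambda\in\mathbb{R}$, let $d_0\geq 1$ be an integer, set $n=1+d_0$, let $k\in\mathbb{N}$ and let $\alpha\in\mathbb{R}$ with $\alpha>nA$. Define $F(u)=-\tfrac{1}{A}\log(1-u)$ for $u\in(0,1)$ and $H(u)=e^{-\alpha F(u)}\,F'(u)^{d_0-1}\,(F'(u)+u F''(u))\,(1+\lambda u F'(u))$. Then $\frac{\Gamma(k+1)}{\Gamma(k+d_0)}\int_0^1 u^{k+d_0-1}H(u)\,du=\frac{\Gamma(k+1)\,\Gamma(\alpha/A-n)\,(\alpha+\lambda k+d_0\lambda-nA)}{A^{n}\,\Gamma(\alpha/A+k)}$. -/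

import Mathlib

open Real MeasureTheory Set

lemma beta_aux (a : ℕ) {s : ℝ} (hs : 0 < s) :
    IntegrableOn (fun u : ℝ => u ^ a * (1 - u) ^ (s - 1)) (Ioo 0 1) volume ∧
    ∫ u in Ioo (0:ℝ) 1, u ^ a * (1 - u) ^ (s - 1) =
      Real.Gamma (a + 1) * Real.Gamma s / Real.Gamma (a + 1 + s) := by
  have hre : 0 < Complex.re ((a : ℂ) + 1) := by simp; positivity
  have hsre : 0 < Complex.re (s : ℂ) := by simpa using hs
  have hconv := Complex.betaIntegral_convergent hre hsre
  have heq : ∀ x ∈ Ioo (0:ℝ) 1,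
      (x : ℂ) ^ ((a : ℂ) + 1 - 1) * ((1 : ℂ) - x) ^ ((s : ℂ) - 1) =
        ((x ^ a * (1 - x) ^ (s - 1) : ℝ) : ℂ) := by
    intro x hx
    have h1 : (0:ℝ) ≤ 1 - x := by linarith [hx.2]
    rw [show ((a : ℂ) + 1 - 1) = ((a : ℕ) : ℂ) by ring, Complex.cpow_natCast,
      show ((1 : ℂ) - x) = ((1 - x : ℝ) : ℂ) by push_cast; ring,
      show ((s : ℂ) - 1) = ((s - 1 : ℝ) : ℂ) by push_cast; ring,
      ← Complex.ofReal_cpow h1]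
    push_cast; ring
  have hIntC : IntegrableOn
      (fun x : ℝ => (x : ℂ) ^ ((a : ℂ) + 1 - 1) * ((1 : ℂ) - x) ^ ((s : ℂ) - 1))
      (Ioo 0 1) volume :=
    ((intervalIntegrable_iff_integrableOn_Ioc_of_le (by norm_num)).mp hconv).mono_set
      Ioo_subset_Ioc_self
  have hIntR : IntegrableOn (fun u : ℝ => u ^ a * (1 - u) ^ (s - 1)) (Ioo 0 1) volume := by
    refine hIntC.re.congr ((ae_restrict_iff' measurableSet_Ioo).mpr (ae_of_all _ fun x hx => ?_))
    simpa [← Complex.ofReal_pow] using congrArg Complex.re (heq x hx)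
  refine ⟨hIntR, ?_⟩
  have hG := Complex.Gamma_mul_Gamma_eq_betaIntegral hre hsre
  have hbeta : Complex.betaIntegral ((a : ℂ) + 1) (s : ℂ) =
      ((∫ u in Ioo (0:ℝ) 1, u ^ a * (1 - u) ^ (s - 1) : ℝ) : ℂ) := by
    rw [Complex.betaIntegral, intervalIntegral.integral_of_le (by norm_num : (0:ℝ) ≤ 1),
      integral_Ioc_eq_integral_Ioo, setIntegral_congr_fun measurableSet_Ioo heq]
    exact integral_ofReal
  rw [hbeta] at hG
  have hcast1 : ((a : ℂ) + 1) = (((a : ℝ) + 1 : ℝ) : ℂ) := by push_cast; ring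
  have hcast2 : ((a : ℂ) + 1 + (s : ℂ)) = (((a : ℝ) + 1 + s : ℝ) : ℂ) := by push_cast; ring
  rw [hcast2, hcast1, Complex.Gamma_ofReal, Complex.Gamma_ofReal, Complex.Gamma_ofReal,
    ← Complex.ofReal_mul, ← Complex.ofReal_mul] at hG
  have hG' := Complex.ofReal_injective hG
  have hpos : 0 < Real.Gamma ((a : ℝ) + 1 + s) := Real.Gamma_pos_of_pos (by positivity)
  field_simp
  linarith [hG']

set_option maxHeartbeats 1000000 in
/-- the fibre weight `ψ(α,k)` for the ball subbundle case with base
dimension `d = 1`, `F(u) = -(1/A) log(1-u)`. -/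
theorem stmt_0 (A : ℝ) (hA : 0 < A) (lam : ℝ) (d0 : ℕ) (hd0 : 1 ≤ d0)
    (n : ℕ) (hn : n = 1 + d0) (k : ℕ) (α : ℝ) (hα : (n : ℝ) * A < α)
    (F : ℝ → ℝ) (hF : ∀ u ∈ Ioo (0 : ℝ) 1, F u = -(1 / A) * Real.log (1 - u))
    (H : ℝ → ℝ)
    (hH : ∀ u ∈ Ioo (0 : ℝ) 1,
      H u = Real.exp (-(α * F u)) * (deriv F u) ^ (d0 - 1) *
        (deriv F u + u * deriv (deriv F) u) * (1 + lam * u * deriv F u)) :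
    Real.Gamma (k + 1) / Real.Gamma (k + d0) *
        ∫ u in Ioo (0 : ℝ) 1, u ^ (k + d0 - 1) * H u =
      Real.Gamma (k + 1) * Real.Gamma (α / A - n) *
          (α + lam * k + d0 * lam - n * A) /
        (A ^ n * Real.Gamma (α / A + k)) := by
  obtain ⟨m, rfl⟩ : ∃ m, d0 = m + 1 := ⟨d0 - 1, (Nat.succ_pred_eq_of_pos hd0).symm⟩
  subst hn
  have hα' : ((m : ℝ) + 2) * A < α := by
    have : ((1 + (m + 1) : ℕ) : ℝ) * A < α := hα
    push_cast at this; linarith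
  have hs : 0 < α / A - ((m : ℝ) + 2) := by
    rw [sub_pos, lt_div_iff₀ hA]; linarith
  have hderiv1 : ∀ x ∈ Ioo (0 : ℝ) 1, deriv F x = (A * (1 - x))⁻¹ := by
    intro x hx
    have hx1 : (0 : ℝ) < 1 - x := by linarith [hx.2]
    have hFe : F =ᶠ[nhds x] fun y => -(1 / A) * Real.log (1 - y) :=
      Filter.eventuallyEq_of_mem (isOpen_Ioo.mem_nhds hx) hF
    rw [hFe.deriv_eq]
    have h1 : HasDerivAt (fun y : ℝ => 1 - y) (-1) x := by
      simpa using (hasDerivAt_id x).const_sub 1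
    have h2 : HasDerivAt (fun y : ℝ => Real.log (1 - y)) ((1 - x)⁻¹ * -1) x :=
      (Real.hasDerivAt_log hx1.ne').comp x h1
    have h3 := HasDerivAt.const_mul (-(1 / A)) h2
    rw [h3.deriv]
    field_simp
  have hderiv2 : ∀ x ∈ Ioo (0 : ℝ) 1, deriv (deriv F) x = A⁻¹ * ((1 - x) ^ 2)⁻¹ := by
    intro x hx
    have hx1 : (0 : ℝ) < 1 - x := by linarith [hx.2]
    have hFe : deriv F =ᶠ[nhds x] fun y => A⁻¹ * (1 - y)⁻¹ := by
      filter_upwards [isOpen_Ioo.mem_nhds hx] with y hy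
      rw [hderiv1 y hy, mul_inv]
    rw [hFe.deriv_eq]
    have h1 : HasDerivAt (fun y : ℝ => 1 - y) (-1) x := by
      simpa using (hasDerivAt_id x).const_sub 1
    have h2 : HasDerivAt (fun y : ℝ => (1 - y)⁻¹) (-(-1) / (1 - x) ^ 2) x := h1.inv hx1.ne'
    have h3 := HasDerivAt.const_mul (A⁻¹) h2
    rw [h3.deriv]
    field_simp
  have key : EqOn (fun u : ℝ => u ^ (k + (m + 1) - 1) * H u)
      (fun u : ℝ => (A⁻¹) ^ (1 + (m + 1)) *
        (A * (u ^ (k + m) * (1 - u) ^ (α / A - ((m : ℝ) + 2) - 1)) +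
         (lam - A) * (u ^ (k + m + 1) * (1 - u) ^ (α / A - ((m : ℝ) + 2) - 1))))
      (Ioo 0 1) := by
    intro u hu
    have hu1 : (0 : ℝ) < 1 - u := by linarith [hu.2]
    simp only
    rw [hH u hu, hderiv2 u hu, hderiv1 u hu, hF u hu]
    have hexp : Real.exp (-(α * (-(1 / A) * Real.log (1 - u)))) = (1 - u) ^ (α / A) := by
      rw [Real.rpow_def_of_pos hu1]
      congr 1; field_simp
    rw [hexp]
    have hsplit : (1 - u) ^ (α / A) =
        (1 - u) ^ (α / A - ((m : ℝ) + 2) - 1) * (1 - u) ^ (m + 3 : ℕ) := by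
      rw [← Real.rpow_natCast (1 - u) (m + 3), ← Real.rpow_add hu1]
      congr 1; push_cast; ring
    rw [hsplit]
    have hkm : k + (m + 1) - 1 = k + m := by omega
    have hmm : m + 1 - 1 = m := by omega
    rw [hkm, hmm]
    simp only [mul_inv, mul_pow, inv_pow]
    field_simp
    ring
  rw [setIntegral_congr_fun measurableSet_Ioo key]
  have hb1 := beta_aux (k + m) hs
  have hb2 := beta_aux (k + m + 1) hs
  rw [integral_const_mul, integral_add (hb1.1.const_mul A) (hb2.1.const_mul (lam - A)),
    integral_const_mul, integral_const_mul, hb1.2, hb2.2]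
  have hG1 : 0 < Real.Gamma ((k : ℝ) + m + 1) := Real.Gamma_pos_of_pos (by positivity)
  have hG2 : 0 < Real.Gamma ((k : ℝ) + m + 1 + (α / A - ((m : ℝ) + 2))) :=
    Real.Gamma_pos_of_pos (by positivity)
  have hGs : 0 < Real.Gamma (α / A - ((m : ℝ) + 2)) := Real.Gamma_pos_of_pos hs
  have eG1 : Real.Gamma (((k + m : ℕ) : ℝ) + 1) = Real.Gamma ((k : ℝ) + m + 1) := by
    congr 1; push_cast; ring
  have eG2 : Real.Gamma (((k + m : ℕ) : ℝ) + 1 + (α / A - ((m : ℝ) + 2))) =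
      Real.Gamma ((k : ℝ) + m + 1 + (α / A - ((m : ℝ) + 2))) := by
    congr 1; push_cast; ring
  have eG3 : Real.Gamma (((k + m + 1 : ℕ) : ℝ) + 1) =
      ((k : ℝ) + m + 1) * Real.Gamma ((k : ℝ) + m + 1) := by
    rw [show (((k + m + 1 : ℕ) : ℝ) + 1) = ((k : ℝ) + m + 1) + 1 by push_cast; ring,
      Real.Gamma_add_one (by positivity)]
  have eG4 : Real.Gamma (((k + m + 1 : ℕ) : ℝ) + 1 + (α / A - ((m : ℝ) + 2))) =
      ((k : ℝ) + m + 1 + (α / A - ((m : ℝ) + 2))) *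
        Real.Gamma ((k : ℝ) + m + 1 + (α / A - ((m : ℝ) + 2))) := by
    rw [show (((k + m + 1 : ℕ) : ℝ) + 1 + (α / A - ((m : ℝ) + 2))) =
        ((k : ℝ) + m + 1 + (α / A - ((m : ℝ) + 2))) + 1 by push_cast; ring,
      Real.Gamma_add_one (by positivity)]
  have eG5 : Real.Gamma (α / A + k) =
      ((k : ℝ) + m + 1 + (α / A - ((m : ℝ) + 2))) *
        Real.Gamma ((k : ℝ) + m + 1 + (α / A - ((m : ℝ) + 2))) := by
    rw [show (α / A + (k : ℝ)) =
        ((k : ℝ) + m + 1 + (α / A - ((m : ℝ) + 2))) + 1 by ring,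
      Real.Gamma_add_one (by positivity)]
  have eG6 : Real.Gamma (α / A - ((1 + (m + 1) : ℕ) : ℝ)) =
      Real.Gamma (α / A - ((m : ℝ) + 2)) := by congr 1; push_cast; ring
  have eG7 : Real.Gamma ((k : ℝ) + ((1 + (m + 1) : ℕ) : ℝ)) = Real.Gamma ((k : ℝ) + m + 2) := by
    congr 1; push_cast; ring
  have eG8 : Real.Gamma ((k : ℝ) + m + 2) = ((k : ℝ) + m + 1) * Real.Gamma ((k : ℝ) + m + 1) := by
    rw [show ((k : ℝ) + m + 2) = ((k : ℝ) + m + 1) + 1 by ring,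
      Real.Gamma_add_one (by positivity)]
  have hkm1 : (0 : ℝ) < (k : ℝ) + m + 1 := by positivity
  have hkms : (0 : ℝ) < (k : ℝ) + m + 1 + (α / A - ((m : ℝ) + 2)) := by positivity
  rw [eG1, eG2, eG3, eG4, eG5, eG6]
  push_cast
  rw [show Real.Gamma ((k:ℝ) + ((m:ℝ) + 1)) = Real.Gamma ((k : ℝ) + m + 1) from by congr 1; ring]
  set s : ℝ := α / A - ((m : ℝ) + 2) with hs_def
  set G1 := Real.Gamma ((k : ℝ) + m + 1) with hG1_def
  set G2 := Real.Gamma ((k : ℝ) + m + 1 + s) with hG2_def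
  set Gs := Real.Gamma s with hGs_def
  have hα_eq : α = A * s + ((m : ℝ) + 2) * A := by rw [hs_def]; field_simp; ring
  rw [hα_eq]
  have h1 : G1 ≠ 0 := ne_of_gt hG1
  have h2 : G2 ≠ 0 := ne_of_gt hG2
  have h3 : ((k : ℝ) + m + 1 + s) ≠ 0 := ne_of_gt hkms
  clear_value s G1 G2 Gs
  simp only [inv_pow]
  field_simp
  ring
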